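/- Let T₁, ..., T_d be commuting linear contractions on a Banach space B such that for each i and each x ∈ B the averages (1/n)Σ_{k=0}^{n−1} T_i^k x converge in norm (with limit denoted Φ_i(x), and each Φ_i is a contraction commuting with the T_j's). Then the multiaverages s_k(x) = (1/(k₁⋯k_d)) Σ_{i₁<k₁} ⋯ Σ_{i_d<k_d} T₁^{i₁}⋯T_d^{i_d} x converge in norm, as k → ∞ in Pringsheim's sense, to Φ₁(Φ₂(⋯Φ_d(x)⋯)). (Inductive step of Theorem 2.3 / the mean multiparameter ergodic theorem.) -/

import Mathlib

open Finset Filter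

/-- Product of sums distributes over an ordered `List.ofFn` product
(noncommutative version of `Finset.prod_univ_sum`). -/
lemma ofFn_prod_sum {R : Type*} [NonAssocSemiring R] :
    ∀ (d : ℕ) (k : Fin d → ℕ) (f : Fin d → ℕ → R),
    ∑ i ∈ Fintype.piFinset (fun j => range (k j)),
        (List.ofFn fun j => f j (i j)).prod
      = (List.ofFn fun j => ∑ m ∈ range (k j), f j m).prod := by
  intro d
  induction d with
  | zero => intro k f; simp
  | succ n ih =>
    intro k f
    rw [List.ofFn_succ, List.prod_cons, ← ih (fun j => k j.succ) (fun j => f j.succ),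
      Finset.sum_mul_sum]
    rw [← Finset.sum_product']
    refine Finset.sum_nbij' (fun i => (i 0, Fin.tail i)) (fun p => Fin.cons p.1 p.2) ?_ ?_ ?_ ?_ ?_
    · intro i hi
      simp only [Fintype.mem_piFinset] at hi
      simp only [Finset.mem_product, Fintype.mem_piFinset]
      exact ⟨hi 0, fun j => hi j.succ⟩
    · intro p hp
      simp only [Finset.mem_product, Fintype.mem_piFinset] at hp
      simp only [Fintype.mem_piFinset]
      intro j
      refine Fin.cases ?_ ?_ j
      · simpa using hp.1
      · intro j'; simpa using hp.2 j'
    · intro i hi; exact Fin.cons_self_tail i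
    · intro p hp; simp [Fin.tail_cons]
    · intro i hi
      rw [List.ofFn_succ, List.prod_cons]
      simp [Fin.tail]

/-- Scalars pull out of an ordered `List.ofFn` product. -/
lemma ofFn_prod_smul {R : Type*} [Semiring R] [Algebra ℝ R] :
    ∀ (d : ℕ) (c : Fin d → ℝ) (S : Fin d → R),
    (List.ofFn fun j => c j • S j).prod = (∏ j, c j) • (List.ofFn S).prod := by
  intro d
  induction d with
  | zero => intro c S; simp
  | succ n ih =>
    intro c S
    rw [List.ofFn_succ, List.prod_cons, ih (fun j => c j.succ) (fun j => S j.succ),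
      List.ofFn_succ, List.prod_cons, Fin.prod_univ_succ, smul_mul_assoc,
      mul_smul_comm, smul_smul]

/-- Telescoping estimate for products of contractions. -/
lemma tele_estimate {B : Type*} [NormedAddCommGroup B] [NormedSpace ℝ B] :
    ∀ (n : ℕ) (P Q : Fin n → (B →L[ℝ] B)) (x : B) (ε : ℝ),
    (∀ j, ‖P j‖ ≤ 1) →
    (∀ j : Fin n, ‖(P j - Q j) (((List.ofFn Q).drop ((j : ℕ) + 1)).prod x)‖ ≤ ε) →
    ‖(List.ofFn P).prod x - (List.ofFn Q).prod x‖ ≤ n * ε := by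
  intro n
  induction n with
  | zero => intro P Q x ε _ _; simp
  | succ n ih =>
    intro P Q x ε hP hPQ
    have hQ' : List.ofFn Q = Q 0 :: List.ofFn (fun j => Q j.succ) := List.ofFn_succ (f := Q)
    have key := ih (fun j => P j.succ) (fun j => Q j.succ) x ε (fun j => hP j.succ) ?_
    · rw [List.ofFn_succ, List.prod_cons, hQ', List.prod_cons]
      have h0 := hPQ 0
      rw [hQ'] at h0
      simp only [List.drop_succ_cons, List.drop_zero, Fin.val_zero] at h0
      calc ‖(P 0) ((List.ofFn fun j => P j.succ).prod x)
            - (Q 0) ((List.ofFn fun j => Q j.succ).prod x)‖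
          ≤ ‖(P 0) ((List.ofFn fun j => P j.succ).prod x)
              - (P 0) ((List.ofFn fun j => Q j.succ).prod x)‖
            + ‖(P 0) ((List.ofFn fun j => Q j.succ).prod x)
              - (Q 0) ((List.ofFn fun j => Q j.succ).prod x)‖ :=
            norm_sub_le_norm_sub_add_norm_sub _ _ _
        _ ≤ n * ε + ε := by
            refine add_le_add ?_ ?_
            · calc ‖(P 0) ((List.ofFn fun j => P j.succ).prod x)
                    - (P 0) ((List.ofFn fun j => Q j.succ).prod x)‖
                  = ‖(P 0) ((List.ofFn fun j => P j.succ).prod x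
                      - (List.ofFn fun j => Q j.succ).prod x)‖ := by rw [map_sub]
                _ ≤ ‖P 0‖ * ‖(List.ofFn fun j => P j.succ).prod x
                      - (List.ofFn fun j => Q j.succ).prod x‖ := (P 0).le_opNorm _
                _ ≤ 1 * (n * ε) := mul_le_mul (hP 0) key (norm_nonneg _)
                    (le_trans (norm_nonneg _) (hP 0))
                _ = n * ε := one_mul _
            · simpa using h0
        _ = (n + 1 : ℕ) * ε := by push_cast; ring
    · intro j
      have h := hPQ j.succ
      rw [hQ'] at h
      simpa using h

/-- The Cesàro averages of a contraction are contractions. -/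
lemma avg_norm_le {B : Type*} [NormedAddCommGroup B] [NormedSpace ℝ B]
    (S : B →L[ℝ] B) (hS : ‖S‖ ≤ 1) (n : ℕ) :
    ‖(n : ℝ)⁻¹ • ∑ m ∈ range n, S ^ m‖ ≤ 1 := by
  rcases Nat.eq_zero_or_pos n with rfl | hn
  · simp
  · rw [norm_smul ((n : ℝ)⁻¹) (∑ m ∈ range n, S ^ m)]
    have h1 : ‖∑ m ∈ range n, S ^ m‖ ≤ (n : ℝ) := by
      calc ‖∑ m ∈ range n, S ^ m‖ ≤ ∑ m ∈ range n, ‖S ^ m‖ := norm_sum_le _ _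
        _ ≤ ∑ m ∈ range n, 1 := by
            refine Finset.sum_le_sum fun m _ => ?_
            rcases Nat.eq_zero_or_pos m with rfl | hm
            · rw [pow_zero]; exact ContinuousLinearMap.norm_id_le (𝕜 := ℝ) (E := B)
            · calc ‖S ^ m‖ ≤ ‖S‖ ^ m := norm_pow_le' S hm
                _ ≤ 1 ^ m := pow_le_pow_left₀ (norm_nonneg _) hS m
                _ = 1 := one_pow m
        _ = (n : ℝ) := by simp
    have h2 : ‖(n : ℝ)⁻¹‖ = (n : ℝ)⁻¹ := by
      rw [Real.norm_eq_abs, abs_of_nonneg (by positivity)]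
    rw [h2]
    calc (n : ℝ)⁻¹ * ‖∑ m ∈ range n, S ^ m‖ ≤ (n : ℝ)⁻¹ * (n : ℝ) := by
          exact mul_le_mul_of_nonneg_left h1 (by positivity)
      _ = 1 := inv_mul_cancel₀ (by exact_mod_cast hn.ne')

/-- Multiparameter mean ergodic theorem: if `T 1, ..., T d` are commuting
contractions of a Banach space whose one-parameter Cesàro averages converge in
norm to contractions `Φ i` (with `T i ∘ Φ i = Φ i` and `Φ i` commuting with every
`T j`), then the multiaverages converge in norm, in Pringsheim's sense, to the
composition `Φ 1 ∘ ⋯ ∘ Φ d`. -/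
theorem multiparameter_mean_ergodic {B : Type*} [NormedAddCommGroup B]
    [NormedSpace ℝ B] [CompleteSpace B] (d : ℕ) (hd : 0 < d)
    (T : Fin d → (B →L[ℝ] B)) (hT : ∀ i, ‖T i‖ ≤ 1)
    (hcomm : ∀ i j, T i * T j = T j * T i)
    (Φ : Fin d → (B →L[ℝ] B)) (hΦ : ∀ i, ‖Φ i‖ ≤ 1)
    (hfix : ∀ i, T i * Φ i = Φ i)
    (hΦcomm : ∀ i j, Φ i * T j = T j * Φ i)
    (hlim : ∀ (i : Fin d) (x : B),
      Tendsto (fun n : ℕ => (n : ℝ)⁻¹ • ∑ k ∈ range n, (T i ^ k) x)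
        atTop (nhds (Φ i x))) :
    ∀ x : B, ∀ ε > (0 : ℝ), ∃ N : ℕ, ∀ k : Fin d → ℕ, (∀ j, N ≤ k j) →
      ‖(∏ j, (k j : ℝ))⁻¹ •
          (∑ i ∈ Fintype.piFinset (fun j => range (k j)),
            (List.ofFn (fun j => T j ^ i j)).prod x) -
        (List.ofFn Φ).prod x‖ < ε := by
  intro x ε hε
  set y : Fin d → B := fun j => ((List.ofFn Φ).drop ((j : ℕ) + 1)).prod x with hy
  have hδ : (0 : ℝ) < ε / (2 * (d + 1)) := by positivity
  set δ := ε / (2 * (d + 1)) with hδdef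
  choose N hN using fun j => Metric.tendsto_atTop.mp (hlim j (y j)) δ hδ
  refine ⟨Finset.univ.sup N, ?_⟩
  intro k hk
  -- rewrite the multiaverage as an ordered product of one-parameter averages
  have key : (∏ j, (k j : ℝ))⁻¹ •
        (∑ i ∈ Fintype.piFinset (fun j => range (k j)),
          (List.ofFn (fun j => T j ^ i j)).prod x)
      = (List.ofFn fun j => ((k j : ℝ))⁻¹ • ∑ m ∈ range (k j), T j ^ m).prod x := by
    rw [← ContinuousLinearMap.sum_apply, ← ContinuousLinearMap.smul_apply]
    congr 1
    rw [ofFn_prod_sum d k (fun j m => T j ^ m),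
      ofFn_prod_smul d (fun j => ((k j : ℝ))⁻¹) (fun j => ∑ m ∈ range (k j), T j ^ m),
      ← Finset.prod_inv_distrib]
  rw [key]
  have hbound := tele_estimate d
    (fun j => ((k j : ℝ))⁻¹ • ∑ m ∈ range (k j), T j ^ m) Φ x δ
    (fun j => avg_norm_le (T j) (hT j) (k j)) ?_
  · calc ‖(List.ofFn fun j => ((k j : ℝ))⁻¹ • ∑ m ∈ range (k j), T j ^ m).prod x
          - (List.ofFn Φ).prod x‖ ≤ d * δ := hbound
      _ < ε := by
          rw [hδdef]
          rw [div_eq_mul_inv, ← mul_assoc]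
          rw [mul_comm (d : ℝ) ε, mul_assoc]
          nth_rewrite 2 [← mul_one ε]
          refine mul_lt_mul_of_pos_left ?_ hε
          rw [← div_eq_mul_inv, div_lt_one (by positivity)]
          push_cast; linarith
  · intro j
    have hNj : N j ≤ k j := le_trans (Finset.le_sup (Finset.mem_univ j)) (hk j)
    have h := hN j (k j) hNj
    rw [dist_eq_norm] at h
    have heq : ((((k j : ℝ))⁻¹ • ∑ m ∈ range (k j), T j ^ m) - Φ j)
          (((List.ofFn Φ).drop ((j : ℕ) + 1)).prod x)
        = ((k j : ℝ))⁻¹ • (∑ m ∈ range (k j), (T j ^ m) (y j)) - Φ j (y j) := by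
      rw [ContinuousLinearMap.sub_apply, ContinuousLinearMap.smul_apply,
        ContinuousLinearMap.sum_apply, hy]
    rw [heq]
    exact le_of_lt h
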